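/- Let m be a positive integer with m ≡ 5 or 8 (mod 12). Then Φ(m×2,3,1) ≤ J(m×2,3,1) − 1, where J(m×2,3,1) = ⌊m(m−1)/3⌋. -/

import Mathlib

/-- The cyclic shift of a codeword `B ⊆ I_m × Z_n` by `τ`. -/
def OOCshift {m n : ℕ} (B : Finset (Fin m × ZMod n)) (τ : ZMod n) :
    Finset (Fin m × ZMod n) :=
  B.image fun p => (p.1, p.2 + τ)

/-- A two-dimensional `(m × n, k, lam)` optical orthogonal code: a family of
`k`-element codewords of `I_m × Z_n` with auto- and cross-correlation at most `lam`. -/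
def IsOOC (m n k lam : ℕ) (C : Finset (Finset (Fin m × ZMod n))) : Prop :=
  (∀ A ∈ C, A.card = k) ∧
  (∀ A ∈ C, ∀ τ : ZMod n, τ ≠ 0 → (A ∩ OOCshift A τ).card ≤ lam) ∧
  (∀ A ∈ C, ∀ B ∈ C, A ≠ B → ∀ τ : ZMod n, (A ∩ OOCshift B τ).card ≤ lam)

namespace OOCaux

variable {m : ℕ}

abbrev Slot (m : ℕ) := (Fin m × Fin m) × ZMod 2

def p2s (p q : Fin m × ZMod 2) : Slot m := ((p.1, q.1), q.2 - p.2)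

def slotSet (A : Finset (Fin m × ZMod 2)) : Finset (Slot m) :=
  ((A ×ˢ A).filter fun pq => pq.1.1 ≠ pq.2.1).image fun pq => p2s pq.1 pq.2

lemma mem_slotSet {A : Finset (Fin m × ZMod 2)} {s : Slot m} :
    s ∈ slotSet A ↔ ∃ p ∈ A, ∃ q ∈ A, p.1 ≠ q.1 ∧ p2s p q = s := by
  simp only [slotSet, Finset.mem_image, Finset.mem_filter, Finset.mem_product]
  constructor
  · rintro ⟨⟨a, b⟩, ⟨⟨ha, hb⟩, hne⟩, h⟩
    exact ⟨a, ha, b, hb, hne, h⟩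
  · rintro ⟨p, hp, q, hq, hne, h⟩
    exact ⟨⟨p, q⟩, ⟨⟨hp, hq⟩, hne⟩, h⟩

lemma card_filter_slotSet (p q r : Fin m × ZMod 2)
    (hpq : p.1 ≠ q.1) (hpr : p.1 ≠ r.1) (hqr : q.1 ≠ r.1)
    (P : Slot m → Prop) [DecidablePred P] :
    ((slotSet {p, q, r}).filter P).card =
      (if P (p2s p q) then 1 else 0) + (if P (p2s p r) then 1 else 0) +
      ((if P (p2s q p) then 1 else 0) + (if P (p2s q r) then 1 else 0)) +
      ((if P (p2s r p) then 1 else 0) + (if P (p2s r q) then 1 else 0)) := by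
  have hmem : ∀ x ∈ ({p, q, r} : Finset (Fin m × ZMod 2)),
      ∀ y ∈ ({p, q, r} : Finset (Fin m × ZMod 2)), x.1 = y.1 → x = y := by
    intro x hx y hy hxy
    simp only [Finset.mem_insert, Finset.mem_singleton] at hx hy
    rcases hx with rfl | rfl | rfl <;> rcases hy with rfl | rfl | rfl <;>
      first
        | rfl
        | exact absurd hxy hpq | exact absurd hxy hpr | exact absurd hxy hqr
        | exact absurd hxy.symm hpq | exact absurd hxy.symm hpr | exact absurd hxy.symm hqr
  have hinj : Set.InjOn (fun pq : (Fin m × ZMod 2) × (Fin m × ZMod 2) => p2s pq.1 pq.2)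
      ↑((({p, q, r} : Finset (Fin m × ZMod 2)) ×ˢ {p, q, r}).filter
        fun pq => pq.1.1 ≠ pq.2.1) := by
    intro a ha b hb hab
    simp only [Finset.coe_filter, Finset.mem_coe, Finset.mem_product, Set.mem_setOf_eq] at ha hb
    simp only [p2s, Prod.mk.injEq] at hab
    have e1 : a.1 = b.1 := hmem _ ha.1.1 _ hb.1.1 hab.1.1
    have e2 : a.2 = b.2 := hmem _ ha.1.2 _ hb.1.2 hab.1.2
    exact Prod.ext e1 e2
  have hp_nm : p ∉ ({q, r} : Finset (Fin m × ZMod 2)) := by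
    simp only [Finset.mem_insert, Finset.mem_singleton]
    push_neg
    exact ⟨fun h => hpq (by rw [h]), fun h => hpr (by rw [h])⟩
  have hq_nm : q ∉ ({r} : Finset (Fin m × ZMod 2)) := by
    simp only [Finset.mem_singleton]
    exact fun h => hqr (by rw [h])
  rw [slotSet, Finset.filter_image, Finset.card_image_of_injOn
    (hinj.mono (by exact_mod_cast Finset.filter_subset _ _)), Finset.filter_filter,
    Finset.card_filter, Finset.sum_product]
  simp only [Finset.sum_insert hp_nm, Finset.sum_insert hq_nm, Finset.sum_singleton]
  have hite : ∀ a b : Fin m × ZMod 2, a.1 ≠ b.1 →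
      (if (¬a.1 = b.1 ∧ P (p2s a b)) then (1:ℕ) else 0) = (if P (p2s a b) then 1 else 0) := by
    intro a b hab; simp [hab]
  have hite0 : ∀ a : Fin m × ZMod 2,
      (if (¬a.1 = a.1 ∧ P (p2s a a)) then (1:ℕ) else 0) = 0 := by
    intro a; simp
  rw [hite0 p, hite0 q, hite0 r, hite p q hpq, hite p r hpr, hite q p hpq.symm,
    hite q r hqr, hite r p hpr.symm, hite r q hqr.symm]
  ring

def allSlots (m : ℕ) : Finset (Slot m) :=
  (Finset.univ : Finset (Fin m)).offDiag ×ˢ (Finset.univ : Finset (ZMod 2))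

lemma card_allSlots : (allSlots m).card = (m * m - m) * 2 := by
  rw [allSlots, Finset.card_product, Finset.offDiag_card]
  simp [ZMod.card]

lemma mem_allSlots {s : Slot m} : s ∈ allSlots m ↔ s.1.1 ≠ s.1.2 := by
  simp [allSlots, Finset.mem_product, Finset.mem_offDiag]

lemma slotSet_subset {A : Finset (Fin m × ZMod 2)} : slotSet A ⊆ allSlots m := by
  intro s hs
  rw [mem_slotSet] at hs
  obtain ⟨p, _, q, _, hne, rfl⟩ := hs
  rw [mem_allSlots]
  exact hne

def sw (s : Slot m) : Slot m := ((s.1.2, s.1.1), s.2)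

lemma sw_sw (s : Slot m) : sw (sw s) = s := rfl

lemma zmod2_sub_comm : ∀ a b : ZMod 2, a - b = b - a := by decide

lemma sw_mem_slotSet {A : Finset (Fin m × ZMod 2)} {s : Slot m} (h : s ∈ slotSet A) :
    sw s ∈ slotSet A := by
  rw [mem_slotSet] at h ⊢
  obtain ⟨p, hp, q, hq, hne, rfl⟩ := h
  refine ⟨q, hq, p, hp, hne.symm, ?_⟩
  simp [p2s, sw, zmod2_sub_comm p.2 q.2]

lemma card_filter_four {α : Type*} [DecidableEq α] (a b c d : α)
    (hab : a ≠ b) (hac : a ≠ c) (had : a ≠ d) (hbc : b ≠ c) (hbd : b ≠ d) (hcd : c ≠ d)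
    (P : α → Prop) [DecidablePred P] :
    (({a, b, c, d} : Finset α).filter P).card =
      (if P a then 1 else 0) + (if P b then 1 else 0) +
      (if P c then 1 else 0) + (if P d then 1 else 0) := by
  have h1 : a ∉ ({b, c, d} : Finset α) := by simp [hab, hac, had]
  have h2 : b ∉ ({c, d} : Finset α) := by simp [hbc, hbd]
  have h3 : c ∉ ({d} : Finset α) := by simp [hcd]
  rw [Finset.card_filter]
  rw [show ({a, b, c, d} : Finset α) = insert a (insert b (insert c {d})) from rfl]
  rw [Finset.sum_insert h1, Finset.sum_insert h2, Finset.sum_insert h3, Finset.sum_singleton]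
  ring

end OOCaux

open OOCaux in
theorem stmt_2 (m : ℕ) (hm : 0 < m) (h : m % 12 = 5 ∨ m % 12 = 8) :
    ∀ C : Finset (Finset (Fin m × ZMod 2)), IsOOC m 2 3 1 C →
      C.card ≤ m * (m - 1) / 3 - 1 := by
  intro C hC
  obtain ⟨hcard3, hauto, hcross⟩ := hC
  -- rows within a codeword are distinct
  have hrow : ∀ A ∈ C, ∀ p ∈ A, ∀ q ∈ A, p.1 = q.1 → p = q := by
    intro A hA p hp q hq h1
    by_contra hne
    have h2 : q.2 = p.2 + 1 := by
      have hsne : p.2 ≠ q.2 := fun hh => hne (Prod.ext h1 hh)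
      revert hsne
      generalize p.2 = a; generalize q.2 = b
      revert a b; decide
    have hadd : ∀ a : ZMod 2, a + 1 + 1 = a := by decide
    have hpmem : p ∈ A ∩ OOCshift A 1 := by
      refine Finset.mem_inter.2 ⟨hp, ?_⟩
      simp only [OOCshift, Finset.mem_image]
      refine ⟨q, hq, ?_⟩
      rw [Prod.ext_iff]
      exact ⟨h1.symm, by rw [h2, hadd]⟩
    have hqmem : q ∈ A ∩ OOCshift A 1 := by
      refine Finset.mem_inter.2 ⟨hq, ?_⟩
      simp only [OOCshift, Finset.mem_image]
      refine ⟨p, hp, ?_⟩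
      rw [Prod.ext_iff]
      exact ⟨h1, by rw [h2]⟩
    have hsub : ({p, q} : Finset (Fin m × ZMod 2)) ⊆ A ∩ OOCshift A 1 := by
      intro x hx
      rcases Finset.mem_insert.1 hx with rfl | hx
      · exact hpmem
      · rw [Finset.mem_singleton] at hx; subst hx; exact hqmem
    have h2le : 2 ≤ (A ∩ OOCshift A 1).card := by
      calc 2 = ({p, q} : Finset (Fin m × ZMod 2)).card := (Finset.card_pair hne).symm
        _ ≤ _ := Finset.card_le_card hsub
    have := hauto A hA 1 (by decide)
    omega
  -- slot sets of distinct codewords are disjoint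
  have hdisj : ∀ A ∈ C, ∀ B ∈ C, A ≠ B → Disjoint (slotSet A) (slotSet B) := by
    intro A hA B hB hAB
    rw [Finset.disjoint_left]
    intro s hsA hsB
    rw [mem_slotSet] at hsA hsB
    obtain ⟨p, hp, q, hq, hne, rfl⟩ := hsA
    obtain ⟨p', hp', q', hq', hne', heq⟩ := hsB
    simp only [p2s, Prod.mk.injEq] at heq
    obtain ⟨⟨e1, e2⟩, e3⟩ := heq
    set τ := p.2 - p'.2 with hτ
    have hpm : p ∈ A ∩ OOCshift B τ := by
      refine Finset.mem_inter.2 ⟨hp, ?_⟩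
      simp only [OOCshift, Finset.mem_image]
      exact ⟨p', hp', by rw [Prod.ext_iff]; exact ⟨e1, by rw [hτ]; ring⟩⟩
    have hqm : q ∈ A ∩ OOCshift B τ := by
      refine Finset.mem_inter.2 ⟨hq, ?_⟩
      simp only [OOCshift, Finset.mem_image]
      refine ⟨q', hq', ?_⟩
      rw [Prod.ext_iff]
      refine ⟨e2, ?_⟩
      show q'.2 + τ = q.2
      rw [hτ]
      linear_combination e3
    have hpq : p ≠ q := fun hh => hne (by rw [hh])
    have hsub : ({p, q} : Finset (Fin m × ZMod 2)) ⊆ A ∩ OOCshift B τ := by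
      intro x hx
      rcases Finset.mem_insert.1 hx with rfl | hx
      · exact hpm
      · rw [Finset.mem_singleton] at hx; subst hx; exact hqm
    have h2le : 2 ≤ (A ∩ OOCshift B τ).card := by
      calc 2 = ({p, q} : Finset (Fin m × ZMod 2)).card := (Finset.card_pair hpq).symm
        _ ≤ _ := Finset.card_le_card hsub
    have := hcross A hA B hB hAB τ
    omega
  -- decomposition of each codeword into a triple with distinct rows
  have htrip : ∀ A ∈ C, ∃ p q r : Fin m × ZMod 2,
      p.1 ≠ q.1 ∧ p.1 ≠ r.1 ∧ q.1 ≠ r.1 ∧ A = {p, q, r} := by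
    intro A hA
    obtain ⟨p, q, r, hpq, hpr, hqr, hAeq⟩ := Finset.card_eq_three.1 (hcard3 A hA)
    have hp : p ∈ A := by rw [hAeq]; simp
    have hq : q ∈ A := by rw [hAeq]; simp
    have hr : r ∈ A := by rw [hAeq]; simp
    exact ⟨p, q, r,
      fun hh => hpq (hrow A hA p hp q hq hh),
      fun hh => hpr (hrow A hA p hp r hr hh),
      fun hh => hqr (hrow A hA q hq r hr hh), hAeq⟩
  -- per-codeword slot counts
  have hcard6 : ∀ A ∈ C, (slotSet A).card = 6 := by
    intro A hA
    obtain ⟨p, q, r, h1, h2, h3, rfl⟩ := htrip A hA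
    have := card_filter_slotSet p q r h1 h2 h3 (fun _ => True)
    simpa using this
  have hcolor : ∀ A ∈ C, 4 ∣ ((slotSet A).filter fun s => s.2 = 1).card := by
    intro A hA
    obtain ⟨p, q, r, h1, h2, h3, rfl⟩ := htrip A hA
    rw [card_filter_slotSet p q r h1 h2 h3 (fun s => s.2 = 1)]
    simp only [p2s]
    have key : ∀ a b c : ZMod 2, 4 ∣
        ((if b - a = 1 then 1 else 0) + (if c - a = 1 then 1 else 0) +
        ((if a - b = 1 then 1 else 0) + (if c - b = 1 then 1 else 0)) +
        ((if a - c = 1 then 1 else 0) + (if b - c = 1 then 1 else 0)) : ℕ) := by decide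
    exact key p.2 q.2 r.2
  have hvert : ∀ A ∈ C, ∀ v : Fin m, 2 ∣ ((slotSet A).filter fun s => s.1.1 = v).card := by
    intro A hA v
    obtain ⟨p, q, r, h1, h2, h3, rfl⟩ := htrip A hA
    rw [card_filter_slotSet p q r h1 h2 h3 (fun s => s.1.1 = v)]
    simp only [p2s]
    by_cases hp : p.1 = v <;> by_cases hq : q.1 = v <;> by_cases hr : r.1 = v <;>
      simp [hp, hq, hr]
  -- the union of all slots used by the code
  set T : Finset (Slot m) := C.biUnion slotSet with hTdef
  have hdisj' : ∀ A ∈ C, ∀ B ∈ C, A ≠ B → Disjoint (slotSet A) (slotSet B) := hdisj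
  have hTcard : T.card = 6 * C.card := by
    rw [hTdef, Finset.card_biUnion hdisj']
    rw [Finset.sum_congr rfl hcard6, Finset.sum_const, smul_eq_mul, mul_comm]
  have hTsub : T ⊆ allSlots m := by
    rw [hTdef]
    exact Finset.biUnion_subset.2 fun A _ => slotSet_subset
  have hTfilter : ∀ (P : Slot m → Prop) [DecidablePred P],
      (T.filter P).card = ∑ A ∈ C, ((slotSet A).filter P).card := by
    intro P _
    rw [hTdef, Finset.filter_biUnion, Finset.card_biUnion]
    intro A hA B hB hAB
    exact (hdisj A hA B hB hAB).mono (Finset.filter_subset _ _) (Finset.filter_subset _ _)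
  have hT1 : 4 ∣ (T.filter fun s => s.2 = 1).card := by
    rw [hTfilter]
    exact Finset.dvd_sum fun A hA => hcolor A hA
  have hTv : ∀ v : Fin m, 2 ∣ (T.filter fun s => s.1.1 = v).card := by
    intro v
    rw [hTfilter]
    exact Finset.dvd_sum fun A hA => hvert A hA v
  have hTsw : ∀ s ∈ T, sw s ∈ T := by
    intro s hs
    rw [hTdef, Finset.mem_biUnion] at hs ⊢
    obtain ⟨A, hA, hs⟩ := hs
    exact ⟨A, hA, sw_mem_slotSet hs⟩
  -- the uncovered slots
  set U : Finset (Slot m) := allSlots m \ T with hUdef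
  have hUcard : U.card = (m * m - m) * 2 - 6 * C.card := by
    rw [hUdef, Finset.card_sdiff_of_subset hTsub, card_allSlots, hTcard]
  have hUfilter : ∀ (P : Slot m → Prop) [DecidablePred P],
      (U.filter P).card = ((allSlots m).filter P).card - (T.filter P).card := by
    intro P _
    have : U.filter P = (allSlots m).filter P \ T.filter P := by
      ext s
      simp only [hUdef, Finset.mem_filter, Finset.mem_sdiff]
      tauto
    rw [this, Finset.card_sdiff_of_subset (Finset.filter_subset_filter P hTsub)]
  -- total counts
  have hall1 : ((allSlots m).filter fun s : Slot m => s.2 = 1).card = m * m - m := by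
    have : ((allSlots m).filter fun s : Slot m => s.2 = 1) =
        (Finset.univ : Finset (Fin m)).offDiag ×ˢ ({1} : Finset (ZMod 2)) := by
      ext s
      simp only [allSlots, Finset.mem_filter, Finset.mem_product, Finset.mem_singleton,
        Finset.mem_univ, and_true, true_and]
    rw [this, Finset.card_product, Finset.offDiag_card]
    simp
  have hallv : ∀ v : Fin m, 2 ∣ ((allSlots m).filter fun s : Slot m => s.1.1 = v).card := by
    intro v
    have : ((allSlots m).filter fun s : Slot m => s.1.1 = v) =
        ((Finset.univ : Finset (Fin m)).offDiag.filter fun e => e.1 = v) ×ˢ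
          (Finset.univ : Finset (ZMod 2)) := by
      ext s
      simp only [allSlots, Finset.mem_filter, Finset.mem_product, Finset.mem_univ,
        and_true, true_and]
    rw [this, Finset.card_product]
    have : (Finset.univ : Finset (ZMod 2)).card = 2 := by
      rw [Finset.card_univ, ZMod.card]
    rw [this]
    exact Dvd.intro_left _ rfl
  -- divisibility of m*m - m
  have hMmod4 : 4 ∣ m * m - m := by
    have hMeq : m * m - m = m * (m - 1) := by
      rw [Nat.mul_sub, mul_one]
    rw [hMeq]
    rcases (by omega : m % 4 = 0 ∨ m % 4 = 1) with h4 | h4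
    · exact Dvd.dvd.mul_right (Nat.dvd_of_mod_eq_zero h4) _
    · exact Dvd.dvd.mul_left (Nat.dvd_of_mod_eq_zero (by omega : (m - 1) % 4 = 0)) _
  -- parity facts about U
  have hU1 : 4 ∣ (U.filter fun s => s.2 = 1).card := by
    rw [hUfilter, hall1]
    exact Nat.dvd_sub hMmod4 hT1
  have hUv : ∀ v : Fin m, 2 ∣ (U.filter fun s => s.1.1 = v).card := by
    intro v
    rw [hUfilter]
    exact Nat.dvd_sub (hallv v) (hTv v)
  have hUsw : ∀ s ∈ U, sw s ∈ U := by
    intro s hs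
    rw [hUdef, Finset.mem_sdiff] at hs ⊢
    refine ⟨?_, ?_⟩
    · rw [mem_allSlots] at hs ⊢
      exact fun hh => hs.1 hh.symm
    · intro hsw
      exact hs.2 (by simpa [sw_sw] using hTsw _ hsw)
  have hUoff : ∀ s ∈ U, s.1.1 ≠ s.1.2 := by
    intro s hs
    rw [hUdef, Finset.mem_sdiff, mem_allSlots] at hs
    exact hs.1
  -- arithmetic: card U = 4 under the contrary assumption
  by_contra hcon
  push_neg at hcon
  have hm5 : 5 ≤ m := by omega
  have hMeq : m * (m - 1) = m * m - m := by
    rw [Nat.mul_sub, mul_one]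
  have hM3 : (m * m - m) % 3 = 2 := by
    rw [← hMeq, Nat.mul_mod, (by omega : m % 3 = 2), (by omega : (m - 1) % 3 = 1)]
  have hM20 : 20 ≤ m * m - m := by
    rw [← hMeq]
    calc 20 = 5 * 4 := rfl
      _ ≤ m * (m - 1) := Nat.mul_le_mul hm5 (by omega)
  have hTle : T.card ≤ (allSlots m).card := Finset.card_le_card hTsub
  rw [hTcard, card_allSlots] at hTle
  rw [hMeq] at hcon
  have hU4 : U.card = 4 := by
    set M := m * m - m with hM
    have hq0 : M = 3 * (M / 3) + 2 := by omega
    have hcc : M / 3 ≤ C.card := by omega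
    omega
  -- extract the four uncovered slots
  obtain ⟨s, hs⟩ := Finset.card_pos.1 (by omega : 0 < U.card)
  have hsU := hs
  have hssU : sw s ∈ U := hUsw s hsU
  have hsne : s ≠ sw s := by
    intro hh
    exact hUoff s hsU (congrArg (fun x : Slot m => x.1.1) hh)
  have hpair_sub : ({s, sw s} : Finset (Slot m)) ⊆ U := by
    intro x hx
    rcases Finset.mem_insert.1 hx with rfl | hx
    · exact hsU
    · rw [Finset.mem_singleton] at hx; subst hx; exact hssU
  have hVcard : (U \ ({s, sw s} : Finset (Slot m))).card = 2 := by
    rw [Finset.card_sdiff_of_subset hpair_sub, Finset.card_pair hsne, hU4]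
  obtain ⟨t, ht⟩ := Finset.card_pos.1 (by omega : 0 < (U \ ({s, sw s} : Finset (Slot m))).card)
  rw [Finset.mem_sdiff] at ht
  obtain ⟨htU, htnm⟩ := ht
  simp only [Finset.mem_insert, Finset.mem_singleton] at htnm
  push_neg at htnm
  obtain ⟨htns, htnss⟩ := htnm
  have httU : sw t ∈ U := hUsw t htU
  have htne : t ≠ sw t := by
    intro hh
    exact hUoff t htU (congrArg (fun x : Slot m => x.1.1) hh)
  have hswt_ne_s : sw t ≠ s := by
    intro hh
    exact htnss (by rw [← hh, sw_sw])
  have hswt_ne_ss : sw t ≠ sw s := by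
    intro hh
    exact htns (by have := congrArg sw hh; rwa [sw_sw, sw_sw] at this)
  have hWsub : ({s, sw s, t, sw t} : Finset (Slot m)) ⊆ U := by
    intro x hx
    simp only [Finset.mem_insert, Finset.mem_singleton] at hx
    rcases hx with rfl | rfl | rfl | rfl
    · exact hsU
    · exact hssU
    · exact htU
    · exact httU
  have hn1 : s ∉ ({sw s, t, sw t} : Finset (Slot m)) := by
    simp only [Finset.mem_insert, Finset.mem_singleton]
    push_neg
    exact ⟨hsne, Ne.symm htns, Ne.symm hswt_ne_s⟩
  have hn2 : sw s ∉ ({t, sw t} : Finset (Slot m)) := by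
    simp only [Finset.mem_insert, Finset.mem_singleton]
    push_neg
    exact ⟨Ne.symm htnss, Ne.symm hswt_ne_ss⟩
  have hn3 : t ∉ ({sw t} : Finset (Slot m)) := by
    simp only [Finset.mem_singleton]
    exact htne
  have hWcard : ({s, sw s, t, sw t} : Finset (Slot m)).card = 4 := by
    rw [show ({s, sw s, t, sw t} : Finset (Slot m)) =
      insert s (insert (sw s) (insert t {sw t})) from rfl]
    rw [Finset.card_insert_of_notMem hn1, Finset.card_insert_of_notMem hn2,
      Finset.card_insert_of_notMem hn3, Finset.card_singleton]
  have hUW : U = ({s, sw s, t, sw t} : Finset (Slot m)) :=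
    (Finset.eq_of_subset_of_card_le hWsub (by omega)).symm
  -- destructure the two independent slots
  obtain ⟨⟨i, j⟩, d⟩ := s
  obtain ⟨⟨k, l⟩, e⟩ := t
  have hij : i ≠ j := hUoff _ hsU
  have hsws : sw ((i, j), d) = ((j, i), d) := rfl
  have hswt : sw ((k, l), e) = ((l, k), e) := rfl
  have hji : ¬ j = i := fun hh => hij hh.symm
  -- vertex parity at i
  have hvi := hUv i
  rw [hUW, card_filter_four _ _ _ _ hsne (Ne.symm htns) (Ne.symm hswt_ne_s)
    (Ne.symm htnss) (Ne.symm hswt_ne_ss) htne (fun x : Slot m => x.1.1 = i)] at hvi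
  rw [hsws, hswt] at hvi
  have hvi' : 2 ∣ 1 + ((if k = i then (1:ℕ) else 0) + (if l = i then 1 else 0)) := by
    have h11 : ((((i, j), d) : Slot m).1.1 = i) = True := by simp
    have h12 : ((((j, i), d) : Slot m).1.1 = i) = False := by simp [hji]
    have h13 : ((((k, l), e) : Slot m).1.1 = i) = (k = i) := by simp
    have h14 : ((((l, k), e) : Slot m).1.1 = i) = (l = i) := by simp
    simp only [h11, h12, h13, h14, if_true, if_false, ite_true, ite_false] at hvi
    simpa [add_assoc] using hvi
  -- vertex parity at j
  have hvj := hUv j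
  rw [hUW, card_filter_four _ _ _ _ hsne (Ne.symm htns) (Ne.symm hswt_ne_s)
    (Ne.symm htnss) (Ne.symm hswt_ne_ss) htne (fun x : Slot m => x.1.1 = j)] at hvj
  rw [hsws, hswt] at hvj
  have hvj' : 2 ∣ 1 + ((if k = j then (1:ℕ) else 0) + (if l = j then 1 else 0)) := by
    have h11 : ((((i, j), d) : Slot m).1.1 = j) = False := by simp [hij]
    have h12 : ((((j, i), d) : Slot m).1.1 = j) = True := by simp
    have h13 : ((((k, l), e) : Slot m).1.1 = j) = (k = j) := by simp
    have h14 : ((((l, k), e) : Slot m).1.1 = j) = (l = j) := by simp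
    simp only [h11, h12, h13, h14, if_true, if_false, ite_true, ite_false] at hvj
    simpa [add_assoc] using hvj
  have hxi : (k = i ∧ ¬ l = i) ∨ (¬ k = i ∧ l = i) := by
    by_cases hki : k = i <;> by_cases hli : l = i <;>
      simp only [hki, hli, if_true, if_false, ite_true, ite_false, reduceIte] at hvi' <;>
      first
        | (left; exact ⟨by assumption, by assumption⟩)
        | (right; exact ⟨by assumption, by assumption⟩)
        | omega
  have hxj : (k = j ∧ ¬ l = j) ∨ (¬ k = j ∧ l = j) := by
    by_cases hkj : k = j <;> by_cases hlj : l = j <;>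
      simp only [hkj, hlj, if_true, if_false, ite_true, ite_false, reduceIte] at hvj' <;>
      first
        | (left; exact ⟨by assumption, by assumption⟩)
        | (right; exact ⟨by assumption, by assumption⟩)
        | omega
  -- conclude e ≠ d
  have hed : e ≠ d := by
    rcases hxi with ⟨hki, hli⟩ | ⟨hki, hli⟩ <;> rcases hxj with ⟨hkj, hlj⟩ | ⟨hkj, hlj⟩
    · exact absurd (hki.symm.trans hkj) hij
    · subst hki; subst hlj
      intro hh; subst hh
      exact htns rfl
    · subst hkj; subst hli
      intro hh; subst hh
      exact htnss rfl
    · exact absurd (hli.symm.trans hlj) hij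
  -- color parity contradiction
  have hc := hU1
  rw [hUW, card_filter_four _ _ _ _ hsne (Ne.symm htns) (Ne.symm hswt_ne_s)
    (Ne.symm htnss) (Ne.symm hswt_ne_ss) htne (fun x : Slot m => x.2 = 1)] at hc
  have hz : ∀ a b : ZMod 2, a ≠ b → ((a = 1 ∧ ¬ b = 1) ∨ (¬ a = 1 ∧ b = 1)) := by decide
  have h21 : ((((i, j), d) : Slot m).2 = 1) = (d = 1) := rfl
  have h22 : ((sw (((i, j), d) : Slot m)).2 = 1) = (d = 1) := rfl
  have h23 : ((((k, l), e) : Slot m).2 = 1) = (e = 1) := rfl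
  have h24 : ((sw (((k, l), e) : Slot m)).2 = 1) = (e = 1) := rfl
  simp only [h21, h22, h23, h24] at hc
  rcases hz e d hed with ⟨h1, h2⟩ | ⟨h1, h2⟩ <;>
    simp only [h1, h2, if_true, if_false, ite_true, ite_false, reduceIte] at hc <;>
    omega
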